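/- For all 1 ≤ i ≤ j ≤ e: (i) every Λ_e-module endomorphism of the uniserial module U_{[i,j]} is a scalar multiple of the identity; and (ii) the identity of U_{[i,j]} does not factor through any projective Λ_e-module. Consequently the stable endomorphism ring of U_{[i,j]} is isomorphic to k. -/

import Mathlib

/-! Common framework: representations of the quiver Q_e / modules over the
generalized Brauer star algebra Λ_e, encoded as a module `V` together with
endomorphisms `v i` (images of the vertex idempotents), `a i` (images of the
arrows; `a i` is the arrow leaving vertex `i`, with `a ⟨e-1⟩` the arrow
`α_e : e → 1`) and `d` (image of the loop `δ`). -/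

namespace GBTA

structure PreRep (R : Type) [CommRing R] (e : ℕ) : Type 1 where
  V : Type
  [instAdd : AddCommGroup V]
  [instMod : Module R V]
  v : Fin e → Module.End R V
  a : Fin e → Module.End R V
  d : Module.End R V

attribute [instance] PreRep.instAdd PreRep.instMod

variable {R : Type} [CommRing R] {e : ℕ}

/-- The (0-based) index of the vertex `e`. -/
def ve (e : ℕ) [NeZero e] : Fin e :=
  ⟨e - 1, by have := Nat.pos_of_ne_zero (NeZero.ne e); omega⟩

/-- The (0-based) index of the vertex `e - 1`. -/
def vem (e : ℕ) [NeZero e] : Fin e :=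
  ⟨e - 2, by have := Nat.pos_of_ne_zero (NeZero.ne e); omega⟩

open Fin.NatCast in
/-- The cycle `C_i`: the composite of the `e` cyclically consecutive arrows
starting with the arrow leaving vertex `i` (composites written right to left). -/
def cyc [NeZero e] (ρ : PreRep R e) (i : Fin e) : Module.End R ρ.V :=
  (((List.range e).reverse).map fun (l : ℕ) => ρ.a (i + (l : Fin e))).prod

/-- The defining relations of the generalized Brauer star algebra `Λ_e`. -/
def Satisfies [NeZero e] (ρ : PreRep R e) : Prop :=
  (∀ i j : Fin e, i ≠ j → ρ.v i * ρ.v j = 0) ∧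
  (∀ i : Fin e, ρ.v i * ρ.v i = ρ.v i) ∧
  ((∑ i : Fin e, ρ.v i) = 1) ∧
  (∀ i : Fin e, ρ.a i = ρ.v (i + 1) * ρ.a i * ρ.v i) ∧
  (ρ.d = ρ.v (ve e) * ρ.d * ρ.v (ve e)) ∧
  (ρ.d * ρ.a (vem e) = 0) ∧
  (ρ.a (ve e) * ρ.d = 0) ∧
  (ρ.d * ρ.d = cyc ρ (ve e) * cyc ρ (ve e)) ∧
  (∀ i : Fin e, i ≠ ve e → ρ.a i * (cyc ρ i * cyc ρ i) = 0)

/-- The space of `Λ_e`-module homomorphisms `ρ → σ`: linear maps commuting with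
all the structure maps. -/
def homSet (ρ σ : PreRep R e) : Submodule R (ρ.V →ₗ[R] σ.V) where
  carrier := {f | (∀ i, f ∘ₗ ρ.v i = σ.v i ∘ₗ f) ∧ (∀ i, f ∘ₗ ρ.a i = σ.a i ∘ₗ f) ∧
    f ∘ₗ ρ.d = σ.d ∘ₗ f}
  add_mem' := by
    rintro f g ⟨hfv, hfa, hfd⟩ ⟨hgv, hga, hgd⟩
    exact ⟨fun i => by simp only [LinearMap.add_comp, LinearMap.comp_add, hfv i, hgv i],
      fun i => by simp only [LinearMap.add_comp, LinearMap.comp_add, hfa i, hga i],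
      by simp only [LinearMap.add_comp, LinearMap.comp_add, hfd, hgd]⟩
  zero_mem' := ⟨fun i => by simp, fun i => by simp, by simp⟩
  smul_mem' := by
    rintro c f ⟨hfv, hfa, hfd⟩
    exact ⟨fun i => by simp only [LinearMap.smul_comp, LinearMap.comp_smul, hfv i],
      fun i => by simp only [LinearMap.smul_comp, LinearMap.comp_smul, hfa i],
      by simp only [LinearMap.smul_comp, LinearMap.comp_smul, hfd]⟩

/-- Projectivity of a `Λ_e`-module, via the lifting property in the category of
`Λ_e`-modules. -/
def IsProjective [NeZero e] (P : PreRep R e) : Prop :=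
  Satisfies P ∧
  ∀ (A B : PreRep R e), Satisfies A → Satisfies B →
    ∀ p ∈ homSet A B, Function.Surjective p →
      ∀ g ∈ homSet P B, ∃ h ∈ homSet P A, p ∘ₗ h = g

/-- An endomorphism `f` of `ρ` factors through a projective `Λ_e`-module. -/
def FactorsThroughProjective [NeZero e] (ρ : PreRep R e) (f : ρ.V →ₗ[R] ρ.V) : Prop :=
  ∃ P : PreRep R e, IsProjective P ∧ ∃ g ∈ homSet ρ P, ∃ h ∈ homSet P ρ, f = h ∘ₗ g

/-- "The stable endomorphism ring of `ρ` is isomorphic to the scalars": the identity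
does not factor through a projective, and modulo endomorphisms factoring through
projectives every endomorphism is a scalar multiple of the identity. -/
def StableEndIsoScalars [NeZero e] (ρ : PreRep R e) : Prop :=
  (¬ FactorsThroughProjective ρ LinearMap.id) ∧
  ∀ f ∈ homSet ρ ρ, ∃ c : R, FactorsThroughProjective ρ (f - c • LinearMap.id)

/-- The linear map on `Fin m → W` sending the `src` coordinate to the `dst`
coordinate through `g`, and killing all other coordinates. -/
def mk1 {m : ℕ} {W : Type} [AddCommGroup W] [Module R W] (src dst : Fin m)
    (g : W →ₗ[R] W) : (Fin m → W) →ₗ[R] (Fin m → W) where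
  toFun x := fun r => if r = dst then g (x src) else 0
  map_add' x y := by funext r; by_cases h : r = dst <;> simp [h]
  map_smul' c x := by funext r; by_cases h : r = dst <;> simp [h]

/-- Projection onto the coordinates satisfying `S`. -/
def prj {m : ℕ} {W : Type} [AddCommGroup W] [Module R W] (S : Fin m → Prop)
    [DecidablePred S] : (Fin m → W) →ₗ[R] (Fin m → W) where
  toFun x := fun r => if S r then x r else 0
  map_add' x y := by funext r; by_cases h : S r <;> simp [h]
  map_smul' c x := by funext r; by_cases h : S r <;> simp [h]

/-- Last row index (`e`, 0-based) among `e+1` rows. -/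
def lastRow (e : ℕ) : Fin (e + 1) := ⟨e, Nat.lt_succ_self e⟩

/-- Second-to-last row index (`e-1`, 0-based) among `e+1` rows. -/
def sndRow (e : ℕ) : Fin (e + 1) := ⟨e - 1, by omega⟩

/-- The vertex carrying each of the `e+1` rows: row `r < e-1` sits at vertex `r`,
rows `e-1` and `e` sit at the vertex `e` (0-based index `e-1`). -/
def vrt (e : ℕ) [NeZero e] : Fin (e + 1) → Fin e := fun r =>
  if h : r.val < e - 1 then ⟨r.val, by omega⟩ else ve e


/-- The `n × n` Jordan block with eigenvalue `lam`. -/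
def jordan (R : Type) [CommRing R] (n : ℕ) (lam : R) : Matrix (Fin n) (Fin n) R :=
  Matrix.of fun i j => if i = j then lam else if (j : ℕ) = (i : ℕ) + 1 then 1 else 0

/-- The band module `B(n, lam)`. Rows `0, …, e-2` are the components `k^n` at the
vertices `1, …, e-1`; rows `e-1` and `e` are the two copies of `k^n` at vertex `e`. -/
@[reducible] def band (R : Type) [CommRing R] (e : ℕ) [NeZero e] (n : ℕ) (lam : R) : PreRep R e where
  V := Fin (e + 1) → Fin n → R
  v i := prj fun r => vrt e r = i
  a j :=
    if j.val = e - 1 then mk1 (sndRow e) ⟨0, by omega⟩ LinearMap.id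
    else if j.val = e - 2 then mk1 ⟨e - 2, by omega⟩ (lastRow e) LinearMap.id
    else mk1 ⟨j.val, Nat.lt_succ_of_lt j.isLt⟩ ⟨j.val + 1, Nat.succ_lt_succ j.isLt⟩ LinearMap.id
  d := mk1 (sndRow e) (lastRow e) (Matrix.mulVecLin (jordan R n lam))

/-- The band module `B(1, s)` (with `δ` acting through the scalar `s`); the standard
basis vector `c_i` (`1 ≤ i ≤ e-1`) is the `i-1`-st coordinate, `c_e` the `e-1`-st and
`c_{e+1}` the `e`-th. -/
@[reducible] def band1 (R : Type) [CommRing R] (e : ℕ) [NeZero e] (s : R) : PreRep R e where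
  V := Fin (e + 1) → R
  v i := prj fun r => vrt e r = i
  a j :=
    if j.val = e - 1 then mk1 (sndRow e) ⟨0, by omega⟩ LinearMap.id
    else if j.val = e - 2 then mk1 ⟨e - 2, by omega⟩ (lastRow e) LinearMap.id
    else mk1 ⟨j.val, Nat.lt_succ_of_lt j.isLt⟩ ⟨j.val + 1, Nat.succ_lt_succ j.isLt⟩ LinearMap.id
  d := mk1 (sndRow e) (lastRow e) (s • LinearMap.id)

/-- The projective module `P_e`, with basis `b_{i,1}, b_{i,2}` (row `i-1`) for
`1 ≤ i ≤ e-1` and `b_{e,1}, b_{e,2}` (row `e-1`), `b_{e,3}, b_{e,4}` (row `e`). -/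
@[reducible] def Pe (R : Type) [CommRing R] (e : ℕ) [NeZero e] : PreRep R e where
  V := Fin (e + 1) → Fin 2 → R
  v i := prj fun r => vrt e r = i
  a j :=
    if j.val = e - 1 then mk1 (sndRow e) ⟨0, by omega⟩ LinearMap.id
    else if j.val = e - 2 then
      mk1 ⟨e - 2, by omega⟩ (sndRow e) (Matrix.mulVecLin !![0, 0; 1, 0])
        + mk1 ⟨e - 2, by omega⟩ (lastRow e) (Matrix.mulVecLin !![0, 0; 0, 1])
    else mk1 ⟨j.val, Nat.lt_succ_of_lt j.isLt⟩ ⟨j.val + 1, Nat.succ_lt_succ j.isLt⟩ LinearMap.id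
  d := mk1 (sndRow e) (lastRow e) (Matrix.mulVecLin !![1, 0; 0, 0])
    + mk1 (lastRow e) (lastRow e) (Matrix.mulVecLin !![0, 0; 1, 0])

/-- `Mdef R e τ`: the representation with basis `m_1, …, m_{e+1}` (rows `0, …, e`),
`α_j(m_j) = m_{j+1}` for `j ≤ e-2`, `α_{e-1}(m_{e-1}) = τ · m_{e+1}`,
`α_e(m_e) = m_1`, `δ(m_e) = m_{e+1}`.  For `τ = 0` this is the string module `W`. -/
@[reducible] def Mdef (R : Type) [CommRing R] (e : ℕ) [NeZero e] (t : R) : PreRep R e where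
  V := Fin (e + 1) → R
  v i := prj fun r => vrt e r = i
  a j :=
    if j.val = e - 1 then mk1 (sndRow e) ⟨0, by omega⟩ LinearMap.id
    else if j.val = e - 2 then mk1 ⟨e - 2, by omega⟩ (lastRow e) (t • LinearMap.id)
    else mk1 ⟨j.val, Nat.lt_succ_of_lt j.isLt⟩ ⟨j.val + 1, Nat.succ_lt_succ j.isLt⟩ LinearMap.id
  d := mk1 (sndRow e) (lastRow e) LinearMap.id

/-- The uniserial module `U_{[i,j]}` (with `1 ≤ i ≤ j ≤ e`, 1-based). -/
@[reducible] def U (R : Type) [CommRing R] (e i j : ℕ) : PreRep R e where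
  V := Fin (j + 1 - i) → R
  v t := prj fun r => i - 1 + r.val = t.val
  a t :=
    if h : i ≤ t.val + 1 ∧ t.val + 1 ≤ j - 1 then
      mk1 ⟨t.val + 1 - i, by omega⟩ ⟨t.val + 2 - i, by omega⟩ LinearMap.id
    else 0
  d := 0

/-- The uniserial projective module `P_i` (`i0` is the 0-based index of the vertex),
with basis `p_0, …, p_{2e}` following the cycle of arrows twice around. -/
@[reducible] def Puni (R : Type) [CommRing R] (e : ℕ) [NeZero e] (i0 : ℕ) : PreRep R e where
  V := Fin (2 * e + 1) → R
  v t := prj fun r => (i0 + r.val) % e = t.val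
  a t := ∑ l : Fin (2 * e),
    if (i0 + l.val) % e = t.val then mk1 l.castSucc l.succ LinearMap.id else 0
  d := 0

/-- The simple module `S_e` at the vertex `e`. -/
@[reducible] def Se (R : Type) [CommRing R] (e : ℕ) [NeZero e] : PreRep R e where
  V := R
  v i := if i = ve e then 1 else 0
  a _ := 0
  d := 0

/-- Block upper triangular endomorphism `(x, y) ↦ (f x + θ y, f y)` of `V × V`. -/
def blk {V : Type} [AddCommGroup V] [Module R V] (f th : Module.End R V) :
    Module.End R (V × V) where
  toFun p := (f p.1 + th p.2, f p.2)
  map_add' p q := by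
    simp only [Prod.fst_add, Prod.snd_add, map_add, Prod.mk_add_mk, Prod.mk.injEq, and_true]
    abel
  map_smul' c p := by
    simp only [Prod.smul_fst, Prod.smul_snd, map_smul, Prod.smul_mk, Prod.mk.injEq,
      smul_add, RingHom.id_apply, and_self]

section Ext
variable [NeZero e]

/-- The data of a self-extension of `ρ`: for each generator of `Λ_e`, the
off-diagonal block of its action on `ρ.V × ρ.V`. -/
abbrev Cochain (ρ : PreRep R e) : Type :=
  (Fin e → Module.End R ρ.V) × (Fin e → Module.End R ρ.V) × Module.End R ρ.V

/-- The self-extension of `ρ` determined by the cochain `θ`. -/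
@[reducible] def extRep (ρ : PreRep R e) (th : Cochain ρ) : PreRep R e where
  V := ρ.V × ρ.V
  v i := blk (ρ.v i) (th.1 i)
  a i := blk (ρ.a i) (th.2.1 i)
  d := blk ρ.d th.2.2

/-- `θ` is a cocycle precisely when the corresponding extension is a `Λ_e`-module. -/
def IsCocycle (ρ : PreRep R e) (th : Cochain ρ) : Prop := Satisfies (extRep ρ th)

/-- The coboundary of `φ`; extensions differing by a coboundary are equivalent. -/
def bnd (ρ : PreRep R e) (phi : Module.End R ρ.V) : Cochain ρ :=
  (fun i => ρ.v i * phi - phi * ρ.v i, fun i => ρ.a i * phi - phi * ρ.a i,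
    ρ.d * phi - phi * ρ.d)

/-- `Ext¹_{Λ_e}(ρ, ρ)`, i.e. the space of self-extensions of `ρ` modulo equivalence
(equivalently cocycles modulo coboundaries), is one-dimensional. -/
def ExtSelfOneDimensional (ρ : PreRep R e) : Prop :=
  ∃ th0 : Cochain ρ, IsCocycle ρ th0 ∧ (∀ phi, th0 ≠ bnd ρ phi) ∧
    ∀ th : Cochain ρ, IsCocycle ρ th → ∃ (c : R) (phi : Module.End R ρ.V),
      th = c • th0 + bnd ρ phi

end Ext


/-- The endomorphism algebra of a representation. -/
def endAlg (ρ : PreRep R e) : Subalgebra R (Module.End R ρ.V) where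
  carrier := {f | (∀ i, f * ρ.v i = ρ.v i * f) ∧ (∀ i, f * ρ.a i = ρ.a i * f) ∧
    f * ρ.d = ρ.d * f}
  mul_mem' := by
    rintro f g ⟨hfv, hfa, hfd⟩ ⟨hgv, hga, hgd⟩
    refine ⟨fun i => ?_, fun i => ?_, ?_⟩
    · rw [mul_assoc, hgv i, ← mul_assoc, hfv i, mul_assoc]
    · rw [mul_assoc, hga i, ← mul_assoc, hfa i, mul_assoc]
    · rw [mul_assoc, hgd, ← mul_assoc, hfd, mul_assoc]
  one_mem' := ⟨fun i => by rw [one_mul, mul_one], fun i => by rw [one_mul, mul_one],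
    by rw [one_mul, mul_one]⟩
  add_mem' := by
    rintro f g ⟨hfv, hfa, hfd⟩ ⟨hgv, hga, hgd⟩
    exact ⟨fun i => by rw [add_mul, mul_add, hfv i, hgv i],
      fun i => by rw [add_mul, mul_add, hfa i, hga i],
      by rw [add_mul, mul_add, hfd, hgd]⟩
  zero_mem' := ⟨fun i => by rw [zero_mul, mul_zero], fun i => by rw [zero_mul, mul_zero],
    by rw [zero_mul, mul_zero]⟩
  algebraMap_mem' c :=
    ⟨fun i => Algebra.commutes c (ρ.v i), fun i => Algebra.commutes c (ρ.a i),
      Algebra.commutes c ρ.d⟩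

/-- The endomorphism `τ` of `B(1,λ)` (and of `W`): `c_e ↦ c_{e+1}`, all other
standard basis vectors to `0`. -/
def tau (R : Type) [CommRing R] (e : ℕ) : (Fin (e + 1) → R) →ₗ[R] (Fin (e + 1) → R) :=
  mk1 (sndRow e) (lastRow e) LinearMap.id

/-- The map `r₁ : B(1,λ) → P_e` (with parameter `μ` the coefficient on `b_{e,3}`):
`c_i ↦ b_{i,2}` for `1 ≤ i ≤ e-1`, `c_e ↦ b_{e,2} + μ b_{e,3}`, `c_{e+1} ↦ b_{e,4}`. -/
def r1 (R : Type) [CommRing R] (e : ℕ) (mu : R) :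
    (Fin (e + 1) → R) →ₗ[R] (Fin (e + 1) → Fin 2 → R) where
  toFun x := fun r c => if c = 1 then x r else if r = lastRow e then mu * x (sndRow e) else 0
  map_add' x y := by
    funext r c
    by_cases h : c = 1
    · simp [h]
    · by_cases h2 : r = lastRow e <;> simp [h, h2, mul_add]
  map_smul' t x := by
    funext r c
    by_cases h : c = 1
    · simp [h]
    · by_cases h2 : r = lastRow e <;> simp [h, h2] <;> ring

/-- The map `r₂ : B(1,λ) → P_e`: `c_e ↦ b_{e,4}`, all other basis vectors to `0`. -/
def r2 (R : Type) [CommRing R] (e : ℕ) :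
    (Fin (e + 1) → R) →ₗ[R] (Fin (e + 1) → Fin 2 → R) where
  toFun x := fun r c => if r = lastRow e ∧ c = 1 then x (sndRow e) else 0
  map_add' x y := by
    funext r c
    by_cases h : r = lastRow e ∧ c = 1 <;> simp [h]
  map_smul' t x := by
    funext r c
    by_cases h : r = lastRow e ∧ c = 1 <;> simp [h]

/-- The map `s₁ : P_e → B(1,λ)`: `b_{e,1} ↦ c_e`, `b_{e,2} ↦ c_{e+1}`,
`b_{e,3} ↦ λ c_{e+1}`, `b_{i,1} ↦ c_i`; zero on `b_{e,4}` and the `b_{i,2}`. -/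
def s1 (R : Type) [CommRing R] (e : ℕ) (lam : R) :
    (Fin (e + 1) → Fin 2 → R) →ₗ[R] (Fin (e + 1) → R) where
  toFun y := fun r =>
    if r = lastRow e then y (sndRow e) 1 + lam * y (lastRow e) 0 else y r 0
  map_add' x y := by
    funext r
    by_cases h : r = lastRow e <;> simp [h, mul_add] <;> ring
  map_smul' t x := by
    funext r
    by_cases h : r = lastRow e <;> simp [h] <;> ring

/-- The map `s₂ : P_e → B(1,λ)`: `b_{e,1} ↦ c_{e+1}`, all other basis vectors to `0`. -/
def s2 (R : Type) [CommRing R] (e : ℕ) :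
    (Fin (e + 1) → Fin 2 → R) →ₗ[R] (Fin (e + 1) → R) where
  toFun y := fun r => if r = lastRow e then y (sndRow e) 0 else 0
  map_add' x y := by funext r; by_cases h : r = lastRow e <;> simp [h]
  map_smul' t x := by funext r; by_cases h : r = lastRow e <;> simp [h]

/-- The map `g : W → P_e`, `w_e ↦ b_{e,3}`, `w_{e+1} ↦ b_{e,4}`, `w_j ↦ 0`. -/
def gW (R : Type) [CommRing R] (e : ℕ) :
    (Fin (e + 1) → R) →ₗ[R] (Fin (e + 1) → Fin 2 → R) where
  toFun x := fun r c =>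
    if r = lastRow e then (if c = 0 then x (sndRow e) else x (lastRow e)) else 0
  map_add' x y := by
    funext r c
    by_cases h : r = lastRow e <;> by_cases h2 : c = 0 <;> simp [h, h2]
  map_smul' t x := by
    funext r c
    by_cases h : r = lastRow e <;> by_cases h2 : c = 0 <;> simp [h, h2]

/-- The map `h : P_e → W`, `b_{e,1} ↦ w_e`, `b_{j,1} ↦ w_j`, `b_{e,3} ↦ w_{e+1}`,
zero on `b_{e,2}`, `b_{e,4}` and the `b_{j,2}`. -/
def hW (R : Type) [CommRing R] (e : ℕ) :
    (Fin (e + 1) → Fin 2 → R) →ₗ[R] (Fin (e + 1) → R) where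
  toFun y := fun r => y r 0
  map_add' x y := rfl
  map_smul' t x := rfl





/-! ### Auxiliary material for Statement 4 -/

section Stmt4

lemma mk1_apply' {m : ℕ} {W : Type} [AddCommGroup W] [Module R W] (src dst : Fin m)
    (g : W →ₗ[R] W) (x : Fin m → W) (r : Fin m) :
    mk1 src dst g x r = if r = dst then g (x src) else 0 := rfl

lemma fin_mk_val {n a : ℕ} (h : a < n) : ((⟨a, h⟩ : Fin n) : ℕ) = a := rfl

/-- The zero representation. -/
@[reducible] def Pzero (R : Type) [CommRing R] (e : ℕ) : PreRep R e where
  V := PUnit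
  v _ := 0
  a _ := 0
  d := 0

lemma Pzero_satisfies [NeZero e] : Satisfies (Pzero R e) := by
  refine ⟨?_, ?_, ?_, ?_, ?_, ?_, ?_, ?_, ?_⟩ <;> intros <;> exact Subsingleton.elim _ _

lemma Pzero_projective [NeZero e] : IsProjective (Pzero R e) := by
  refine ⟨Pzero_satisfies, ?_⟩
  intro A B _ _ p _ _ g hg
  refine ⟨0, (homSet _ _).zero_mem, ?_⟩
  apply LinearMap.ext
  intro x
  have hx : x = 0 := Subsingleton.elim _ _
  simp [hx]

lemma factors_zero [NeZero e] (ρ : PreRep R e) : FactorsThroughProjective ρ 0 :=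
  ⟨Pzero R e, Pzero_projective, 0, (homSet _ _).zero_mem, 0, (homSet _ _).zero_mem, by
    apply LinearMap.ext; intro x; simp⟩

lemma homSet_comp {A B C : PreRep R e} {f : B.V →ₗ[R] C.V} {g : A.V →ₗ[R] B.V}
    (hf : f ∈ homSet B C) (hg : g ∈ homSet A B) : f ∘ₗ g ∈ homSet A C := by
  obtain ⟨hfv, hfa, hfd⟩ := hf
  obtain ⟨hgv, hga, hgd⟩ := hg
  refine ⟨fun t => ?_, fun t => ?_, ?_⟩
  · rw [LinearMap.comp_assoc, hgv t, ← LinearMap.comp_assoc, hfv t, LinearMap.comp_assoc]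
  · rw [LinearMap.comp_assoc, hga t, ← LinearMap.comp_assoc, hfa t, LinearMap.comp_assoc]
  · rw [LinearMap.comp_assoc, hgd, ← LinearMap.comp_assoc, hfd, LinearMap.comp_assoc]

lemma prod_shift {N : ℕ} (F : List (Module.End R (Fin N → R)))
    (hF : ∀ f ∈ F, ∀ (x : Fin N → R) (m : ℕ), (∀ r : Fin N, (r : ℕ) < m → x r = 0) →
      ∀ r : Fin N, (r : ℕ) < m + 1 → f x r = 0)
    (x : Fin N → R) (m : ℕ) (hx : ∀ r : Fin N, (r : ℕ) < m → x r = 0) :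
    ∀ r : Fin N, (r : ℕ) < m + F.length → F.prod x r = 0 := by
  induction F with
  | nil =>
    intro r hr
    simpa using hx r (by simpa using hr)
  | cons f F ih =>
    intro r hr
    rw [List.prod_cons, Module.End.mul_apply]
    refine hF f List.mem_cons_self _ (m + F.length) ?_ r (by simp at hr ⊢; omega)
    exact ih (fun f' hf' => hF f' (List.mem_cons_of_mem _ hf'))

open Fin.NatCast in
lemma cyc_eq [NeZero e] (ρ : PreRep R e) (t : Fin e) :
    cyc ρ t = (((List.range e).reverse.map fun (l : ℕ) => t + (l : Fin e)).map ρ.a).prod := by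
  rw [cyc, List.map_map]
  rfl

open Fin.NatCast in
lemma cyc_len [NeZero e] (ρ : PreRep R e) (t : Fin e) :
    (((List.range e).reverse.map fun (l : ℕ) => t + (l : Fin e)).map ρ.a).length = e := by
  rw [List.length_map, List.length_map,
    List.length_reverse, List.length_range]

end Stmt4

section Stmt4U

variable {k : Type} [Field k]

lemma U_v_apply (e i j : ℕ) (t : Fin e) (x : Fin (j + 1 - i) → k) (r : Fin (j + 1 - i)) :
    (U k e i j).v t x r = if i - 1 + (r : ℕ) = (t : ℕ) then x r else 0 := rfl

lemma U_a_zero (e i j : ℕ) (t : Fin e) (ht : ¬ (i ≤ (t : ℕ) + 1 ∧ (t : ℕ) + 1 ≤ j - 1)) :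
    (U k e i j).a t = 0 := dif_neg ht

lemma U_a_apply (e i j : ℕ) (t : Fin e) (x : Fin (j + 1 - i) → k) (r : Fin (j + 1 - i)) :
    (U k e i j).a t x r =
      if i ≤ (t : ℕ) + 1 ∧ (t : ℕ) + 1 ≤ j - 1 ∧ (r : ℕ) = (t : ℕ) + 2 - i then
        x ⟨min ((t : ℕ) + 1 - i) ((r : ℕ)),
          Nat.lt_of_le_of_lt (Nat.min_le_right _ _) r.isLt⟩ else 0 := by
  by_cases h : i ≤ (t : ℕ) + 1 ∧ (t : ℕ) + 1 ≤ j - 1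
  · have hrw : (U k e i j).a t =
        mk1 ⟨(t : ℕ) + 1 - i, by omega⟩ ⟨(t : ℕ) + 2 - i, by omega⟩ LinearMap.id :=
      dif_pos h
    rw [hrw, mk1_apply']
    by_cases hr : (r : ℕ) = (t : ℕ) + 2 - i
    · rw [if_pos (Fin.ext hr), if_pos ⟨h.1, h.2, hr⟩]
      show x _ = x _
      congr 1
      exact Fin.ext (by simp; omega)
    · rw [if_neg (fun hc => hr (by rw [hc])), if_neg (by tauto)]
  · rw [U_a_zero e i j t h, if_neg (by tauto)]
    rfl

lemma U_a_shift (e i j : ℕ) (t : Fin e) (x : Fin (j + 1 - i) → k) (m : ℕ)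
    (hx : ∀ r : Fin (j + 1 - i), (r : ℕ) < m → x r = 0) :
    ∀ r : Fin (j + 1 - i), (r : ℕ) < m + 1 → (U k e i j).a t x r = 0 := by
  intro r hr
  rw [U_a_apply]
  split_ifs with h
  · exact hx _ (by simp; omega)
  · rfl

open Fin.NatCast in
lemma U_cyc_sq (e i j : ℕ) [NeZero e] (h1 : 1 ≤ i) (hij : i ≤ j) (hje : j ≤ e) (t : Fin e) :
    cyc (U k e i j) t * cyc (U k e i j) t = 0 := by
  have hF : ∀ f ∈ (((List.range e).reverse.map fun (l : ℕ) => t + (l : Fin e)).map (U k e i j).a),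
      ∀ (x : Fin (j + 1 - i) → k) (m : ℕ),
        (∀ r : Fin (j + 1 - i), (r : ℕ) < m → x r = 0) →
        ∀ r : Fin (j + 1 - i), (r : ℕ) < m + 1 → f x r = 0 := by
    intro f hf
    rw [List.mem_map] at hf
    obtain ⟨s, -, rfl⟩ := hf
    exact U_a_shift e i j s
  apply LinearMap.ext
  intro x
  funext r
  rw [Module.End.mul_apply, cyc_eq]
  have h1' : ∀ (y : Fin (j + 1 - i) → k) (s : Fin (j + 1 - i)), (s : ℕ) < e →
      (((List.range e).reverse.map fun (l : ℕ) => t + (l : Fin e)).map (U k e i j).a).prod y s = 0 := by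
    intro y s hs
    exact prod_shift _ hF y 0 (by omega) s (by rw [cyc_len]; omega)
  have := prod_shift _ hF
    ((((List.range e).reverse.map fun (l : ℕ) => t + (l : Fin e)).map (U k e i j).a).prod x)
    e (fun s hs => h1' x s hs) r (by rw [cyc_len]; have := r.isLt; omega)
  exact this

lemma U_satisfies (e i j : ℕ) [NeZero e] (he : 2 ≤ e) (h1 : 1 ≤ i) (hij : i ≤ j)
    (hje : j ≤ e) : Satisfies (U k e i j) := by
  have hdz : (U k e i j).d = 0 := rfl
  refine ⟨?_, ?_, ?_, ?_, ?_, ?_, ?_, ?_, ?_⟩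
  · intro t s hts
    apply LinearMap.ext; intro x; funext r
    rw [Module.End.mul_apply]
    rw [show (U k e i j).v t ((U k e i j).v s x) r
        = if i - 1 + (r : ℕ) = (t : ℕ) then (U k e i j).v s x r else 0 from rfl,
      U_v_apply]
    have h0 : (0 : Module.End k (Fin (j+1-i) → k)) x r = 0 := rfl
    rw [h0]
    split_ifs with ha hb
    · exact absurd (Fin.ext (show (t : ℕ) = (s : ℕ) by omega)) hts
    · rfl
    · rfl
  · intro t
    apply LinearMap.ext; intro x; funext r
    rw [Module.End.mul_apply]
    rw [show (U k e i j).v t ((U k e i j).v t x) r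
        = if i - 1 + (r : ℕ) = (t : ℕ) then (U k e i j).v t x r else 0 from rfl,
      U_v_apply]
    split_ifs <;> rfl
  · apply LinearMap.ext; intro x; funext r
    rw [Module.End.one_apply]
    have hco : ((∑ t : Fin e, (U k e i j).v t) x) r = ∑ t : Fin e, (U k e i j).v t x r := by
      rw [LinearMap.coe_sum, Finset.sum_apply, Finset.sum_apply]
    rw [hco]
    have hr : i - 1 + (r : ℕ) < e := by have := r.isLt; omega
    rw [Finset.sum_eq_single (⟨i - 1 + (r : ℕ), hr⟩ : Fin e)]
    · rw [U_v_apply, if_pos rfl]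
    · intro b _ hb
      rw [U_v_apply, if_neg]
      intro hc
      exact hb (Fin.ext hc.symm)
    · intro hmem
      exact absurd (Finset.mem_univ _) hmem
  · intro t
    by_cases h : i ≤ (t : ℕ) + 1 ∧ (t : ℕ) + 1 ≤ j - 1
    · have h1e : (1 : ℕ) % e = 1 := Nat.mod_eq_of_lt (by omega)
      have ht1 : ((t + 1 : Fin e) : ℕ) = (t : ℕ) + 1 := by
        rw [Fin.val_add, Fin.val_one', h1e, Nat.mod_eq_of_lt (by omega)]
      apply LinearMap.ext; intro x; funext r
      rw [Module.End.mul_apply, Module.End.mul_apply]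
      rw [show (U k e i j).v (t+1) ((U k e i j).a t ((U k e i j).v t x)) r
          = if i - 1 + (r : ℕ) = ((t + 1 : Fin e) : ℕ)
            then (U k e i j).a t ((U k e i j).v t x) r else 0 from rfl]
      rw [U_a_apply, U_a_apply, U_v_apply, ht1]
      have hsv : ((⟨min ((t : ℕ) + 1 - i) ((r : ℕ)),
          Nat.lt_of_le_of_lt (Nat.min_le_right _ _) r.isLt⟩ : Fin (j + 1 - i)) : ℕ)
          = min ((t : ℕ) + 1 - i) ((r : ℕ)) := rfl
      split_ifs <;> first | rfl | (exfalso; omega)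
    · rw [U_a_zero e i j t h, mul_zero, zero_mul]
  · rw [hdz]; simp
  · rw [hdz]; simp
  · rw [hdz]; simp
  · rw [hdz, U_cyc_sq e i j h1 hij hje]; simp
  · intro t ht
    rw [U_cyc_sq e i j h1 hij hje]; simp

end Stmt4U

section Stmt4A

variable {k : Type} [Field k]

/-- The extension of the uniserial path by one further step along the cyclic path;
`n + 1` basis vectors, coordinate `r` at vertex `(i - 1 + r) mod e`. -/
@[reducible] def Aext (R : Type) [CommRing R] (e i n : ℕ) : PreRep R e where
  V := Fin (n + 1) → R
  v t := prj fun r => (i - 1 + (r : ℕ)) % e = (t : ℕ)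
  a t := ∑ r : Fin n, if (i - 1 + (r : ℕ)) % e = (t : ℕ)
      then mk1 r.castSucc r.succ LinearMap.id else 0
  d := 0

lemma A_v_apply (e i n : ℕ) (t : Fin e) (x : Fin (n + 1) → k) (r : Fin (n + 1)) :
    (Aext k e i n).v t x r = if (i - 1 + (r : ℕ)) % e = (t : ℕ) then x r else 0 := rfl

lemma A_a_apply (e i n : ℕ) (t : Fin e) (x : Fin (n + 1) → k) (s : Fin (n + 1)) :
    (Aext k e i n).a t x s =
      if 1 ≤ (s : ℕ) ∧ (s : ℕ) ≤ n ∧ (i - 1 + ((s : ℕ) - 1)) % e = (t : ℕ) then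
        x ⟨(s : ℕ) - 1, Nat.lt_of_le_of_lt (Nat.sub_le _ _) s.isLt⟩ else 0 := by
  have hco : (Aext k e i n).a t x s = ∑ r : Fin n,
      ((if (i - 1 + (r : ℕ)) % e = (t : ℕ)
        then mk1 r.castSucc r.succ (LinearMap.id : k →ₗ[k] k)
        else 0) x) s := by
    rw [show (Aext k e i n).a t = ∑ r : Fin n, if (i - 1 + (r : ℕ)) % e = (t : ℕ)
        then mk1 r.castSucc r.succ LinearMap.id else 0 from rfl,
      LinearMap.coe_sum, Finset.sum_apply, Finset.sum_apply]
  rw [hco]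
  by_cases h : 1 ≤ (s : ℕ) ∧ (s : ℕ) ≤ n ∧ (i - 1 + ((s : ℕ) - 1)) % e = (t : ℕ)
  · rw [if_pos h, Finset.sum_eq_single (⟨(s : ℕ) - 1, by omega⟩ : Fin n)]
    · rw [if_pos (show (i - 1 + ((⟨(s:ℕ)-1, by omega⟩ : Fin n) : ℕ)) % e = (t : ℕ)
          from h.2.2), mk1_apply',
        if_pos (Fin.ext (by simp only [Fin.val_succ, fin_mk_val]; omega))]
      show x _ = x _
      congr 1
    · intro b _ hb
      split_ifs with hc
      · rw [mk1_apply', if_neg]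
        intro he'
        apply hb
        apply Fin.ext
        have hv := congrArg Fin.val he'
        simp only [Fin.val_succ] at hv
        simp only [fin_mk_val]
        omega
      · simp
    · intro hmem
      exact absurd (Finset.mem_univ _) hmem
  · rw [if_neg h]
    apply Finset.sum_eq_zero
    intro b _
    split_ifs with hc
    · rw [mk1_apply', if_neg]
      intro he'
      have hv := congrArg Fin.val he'
      simp only [Fin.val_succ] at hv
      refine h ⟨by omega, by omega, ?_⟩
      rw [show (s:ℕ) - 1 = (b:ℕ) by omega]
      exact hc
    · simp

lemma A_a_shift (e i n : ℕ) (t : Fin e) (x : Fin (n + 1) → k) (m : ℕ)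
    (hx : ∀ r : Fin (n + 1), (r : ℕ) < m → x r = 0) :
    ∀ r : Fin (n + 1), (r : ℕ) < m + 1 → (Aext k e i n).a t x r = 0 := by
  intro r hr
  rw [A_a_apply]
  split_ifs with h
  · exact hx _ (by simp; omega)
  · rfl

open Fin.NatCast in
lemma A_cyc_sq (e i n : ℕ) [NeZero e] (hn : n + 1 ≤ 2 * e) (t : Fin e) :
    cyc (Aext k e i n) t * cyc (Aext k e i n) t = 0 := by
  have hF : ∀ f ∈ (((List.range e).reverse.map fun (l : ℕ) => t + (l : Fin e)).map (Aext k e i n).a),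
      ∀ (x : Fin (n + 1) → k) (m : ℕ),
        (∀ r : Fin (n + 1), (r : ℕ) < m → x r = 0) →
        ∀ r : Fin (n + 1), (r : ℕ) < m + 1 → f x r = 0 := by
    intro f hf
    rw [List.mem_map] at hf
    obtain ⟨s, -, rfl⟩ := hf
    exact A_a_shift e i n s
  apply LinearMap.ext
  intro x
  funext r
  rw [Module.End.mul_apply, cyc_eq]
  have h1' : ∀ (y : Fin (n + 1) → k) (s : Fin (n + 1)), (s : ℕ) < e →
      (((List.range e).reverse.map fun (l : ℕ) => t + (l : Fin e)).map (Aext k e i n).a).prod y s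
        = 0 := by
    intro y s hs
    exact prod_shift _ hF y 0 (by omega) s (by rw [cyc_len]; omega)
  have := prod_shift _ hF
    ((((List.range e).reverse.map fun (l : ℕ) => t + (l : Fin e)).map (Aext k e i n).a).prod x)
    e (fun s hs => h1' x s hs) r (by rw [cyc_len]; have := r.isLt; omega)
  exact this

lemma A_satisfies (e i n : ℕ) [NeZero e] (he : 2 ≤ e) (hn : n + 1 ≤ 2 * e) :
    Satisfies (Aext k e i n) := by
  have hdz : (Aext k e i n).d = 0 := rfl
  refine ⟨?_, ?_, ?_, ?_, ?_, ?_, ?_, ?_, ?_⟩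
  · intro t s hts
    apply LinearMap.ext; intro x; funext r
    rw [Module.End.mul_apply]
    rw [show (Aext k e i n).v t ((Aext k e i n).v s x) r
        = if (i - 1 + (r : ℕ)) % e = (t : ℕ) then (Aext k e i n).v s x r else 0 from rfl,
      A_v_apply]
    have h0 : (0 : Module.End k (Fin (n+1) → k)) x r = 0 := rfl
    rw [h0]
    split_ifs with hb hc
    · exact absurd (Fin.ext (show (t : ℕ) = (s : ℕ) by omega)) hts
    · rfl
    · rfl
  · intro t
    apply LinearMap.ext; intro x; funext r
    rw [Module.End.mul_apply]
    rw [show (Aext k e i n).v t ((Aext k e i n).v t x) r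
        = if (i - 1 + (r : ℕ)) % e = (t : ℕ) then (Aext k e i n).v t x r else 0 from rfl,
      A_v_apply]
    split_ifs <;> rfl
  · apply LinearMap.ext; intro x; funext r
    rw [Module.End.one_apply]
    have hco : ((∑ t : Fin e, (Aext k e i n).v t) x) r
        = ∑ t : Fin e, (Aext k e i n).v t x r := by
      rw [LinearMap.coe_sum, Finset.sum_apply, Finset.sum_apply]
    rw [hco]
    have hr : (i - 1 + (r : ℕ)) % e < e := Nat.mod_lt _ (by omega)
    rw [Finset.sum_eq_single (⟨(i - 1 + (r : ℕ)) % e, hr⟩ : Fin e)]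
    · rw [A_v_apply, if_pos rfl]
    · intro b _ hb
      rw [A_v_apply, if_neg]
      intro hc
      exact hb (Fin.ext hc.symm)
    · intro hmem
      exact absurd (Finset.mem_univ _) hmem
  · intro t
    apply LinearMap.ext; intro x; funext s
    rw [Module.End.mul_apply, Module.End.mul_apply]
    rw [show (Aext k e i n).v (t+1) ((Aext k e i n).a t ((Aext k e i n).v t x)) s
        = if (i - 1 + (s : ℕ)) % e = ((t + 1 : Fin e) : ℕ)
          then (Aext k e i n).a t ((Aext k e i n).v t x) s else 0 from rfl]
    rw [A_a_apply, A_a_apply, A_v_apply]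
    by_cases h : 1 ≤ (s : ℕ) ∧ (s : ℕ) ≤ n ∧ (i - 1 + ((s : ℕ) - 1)) % e = (t : ℕ)
    · have hmod : (i - 1 + (s : ℕ)) % e = ((t + 1 : Fin e) : ℕ) := by
        rw [Fin.val_add, Fin.val_one', ← h.2.2]
        rw [show i - 1 + (s : ℕ) = (i - 1 + ((s : ℕ) - 1)) + 1 by omega, Nat.add_mod]
      rw [if_pos h, if_pos hmod, if_pos h, if_pos (show (i - 1 +
          ((⟨(s:ℕ)-1, Nat.lt_of_le_of_lt (Nat.sub_le _ _) s.isLt⟩ : Fin (n+1)) : ℕ)) % e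
          = (t : ℕ) from h.2.2)]
    · rw [if_neg h, if_neg h]
      split_ifs <;> rfl
  · rw [hdz]; simp
  · rw [hdz]; simp
  · rw [hdz]; simp
  · rw [hdz, A_cyc_sq e i n hn]; simp
  · intro t ht
    rw [A_cyc_sq e i n hn]; simp

end Stmt4A


section Stmt4Main

variable {k : Type} [Field k]

/-- Standard basis vector. -/
def sgl (k : Type) [Field k] (N : ℕ) (r : Fin N) : Fin N → k :=
  fun r' => if r' = r then 1 else 0

/-- Projection from the extended module onto `U_{[i,j]}`. -/
def pU (k : Type) [Field k] (e i j : ℕ) :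
    (Aext k e i (j + 1 - i)).V →ₗ[k] (U k e i j).V where
  toFun x := fun r => x r.castSucc
  map_add' _ _ := rfl
  map_smul' _ _ := rfl

lemma pU_mem (e i j : ℕ) [NeZero e] (h1 : 1 ≤ i) (hij : i ≤ j) (hje : j ≤ e) :
    pU k e i j ∈ homSet (Aext k e i (j + 1 - i)) (U k e i j) := by
  refine ⟨fun t => ?_, fun t => ?_, ?_⟩
  · apply LinearMap.ext; intro x; funext r
    show (Aext k e i (j+1-i)).v t x r.castSucc = (U k e i j).v t (pU k e i j x) r
    rw [A_v_apply, U_v_apply]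
    have hmod : (i - 1 + ((r.castSucc : Fin (j+1-i+1)) : ℕ)) % e
        = i - 1 + (r : ℕ) := by
      simp only [Fin.coe_castSucc]
      exact Nat.mod_eq_of_lt (by have := r.isLt; omega)
    rw [hmod]
    rfl
  · apply LinearMap.ext; intro x; funext r
    show (Aext k e i (j+1-i)).a t x r.castSucc = (U k e i j).a t (pU k e i j x) r
    rw [A_a_apply, U_a_apply]
    have hmod : (i - 1 + (((r.castSucc : Fin (j+1-i+1)) : ℕ) - 1)) % e
        = i - 1 + ((r : ℕ) - 1) := by
      simp only [Fin.coe_castSucc]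
      exact Nat.mod_eq_of_lt (by have := r.isLt; omega)
    rw [hmod]
    have hrlt := r.isLt
    simp only [Fin.coe_castSucc]
    split_ifs with hA hB hB
    · exact congrArg x (Fin.ext (by simp only [Fin.coe_castSucc, fin_mk_val]; omega))
    · exfalso; omega
    · exfalso; omega
    · rfl
  · rw [show (Aext k e i (j+1-i)).d = 0 from rfl, show (U k e i j).d = 0 from rfl,
      LinearMap.comp_zero, LinearMap.zero_comp]

lemma pU_surj (e i j : ℕ) : Function.Surjective (pU k e i j) := by
  intro y
  refine ⟨fun s => if h : (s : ℕ) < j + 1 - i then y ⟨(s : ℕ), h⟩ else 0, ?_⟩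
  funext r
  show (if h : ((r.castSucc : Fin (j+1-i+1)) : ℕ) < j + 1 - i
      then y ⟨((r.castSucc : Fin (j+1-i+1)) : ℕ), h⟩ else 0) = y r
  rw [dif_pos (show ((r.castSucc : Fin (j+1-i+1)) : ℕ) < j + 1 - i from by
    simp only [Fin.coe_castSucc]; exact r.isLt)]
  exact congrArg y (Fin.ext (by simp only [Fin.coe_castSucc, fin_mk_val]))

lemma no_split (e i j : ℕ) [NeZero e] (he : 2 ≤ e) (h1 : 1 ≤ i) (hij : i ≤ j) (hje : j ≤ e)
    (g : (U k e i j).V →ₗ[k] (Aext k e i (j + 1 - i)).V)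
    (hg : g ∈ homSet (U k e i j) (Aext k e i (j + 1 - i)))
    (hsp : pU k e i j ∘ₗ g = LinearMap.id) : False := by
  have hnn : j - i < j + 1 - i := by omega
  have hnn1 : j - i + 1 < j + 1 - i + 1 := by omega
  have ht : j - 1 < e := by omega
  set el : Fin (j + 1 - i) → k := fun r => if (r : ℕ) = j - i then 1 else 0 with hel
  have hyv : g el ⟨j - i, by omega⟩ = (1 : k) := by
    have h2 : (pU k e i j ∘ₗ g) el ⟨j - i, hnn⟩ = LinearMap.id el ⟨j - i, hnn⟩ :=
      congrFun (LinearMap.congr_fun hsp el) _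
    have h3 : (pU k e i j ∘ₗ g) el ⟨j - i, hnn⟩ = g el ⟨j - i, by omega⟩ := rfl
    rw [h3] at h2
    rw [h2]
    show el ⟨j - i, hnn⟩ = 1
    rw [hel]
    simp
  have haz : (U k e i j).a ⟨j - 1, ht⟩ = 0 :=
    U_a_zero e i j _ (by simp only [fin_mk_val]; omega)
  have key : (0 : Fin (j + 1 - i + 1) → k)
      = (Aext k e i (j + 1 - i)).a ⟨j - 1, ht⟩ (g el) := by
    have h4 := LinearMap.congr_fun (hg.2.1 ⟨j - 1, ht⟩) el
    rw [LinearMap.comp_apply, LinearMap.comp_apply, haz, LinearMap.zero_apply,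
      map_zero] at h4
    exact h4
  have hcond : 1 ≤ ((⟨j - i + 1, hnn1⟩ : Fin (j + 1 - i + 1)) : ℕ) ∧
      ((⟨j - i + 1, hnn1⟩ : Fin (j + 1 - i + 1)) : ℕ) ≤ j + 1 - i ∧
      (i - 1 + (((⟨j - i + 1, hnn1⟩ : Fin (j + 1 - i + 1)) : ℕ) - 1)) % e
        = ((⟨j - 1, ht⟩ : Fin e) : ℕ) := by
    refine ⟨by simp only [fin_mk_val]; omega, by simp only [fin_mk_val]; omega, ?_⟩
    simp only [fin_mk_val]
    rw [show i - 1 + (j - i + 1 - 1) = j - 1 by omega]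
    exact Nat.mod_eq_of_lt ht
  have h6 := congrFun key (⟨j - i + 1, hnn1⟩ : Fin (j + 1 - i + 1))
  rw [A_a_apply, if_pos hcond] at h6
  have h7 : g el ⟨j - i, by omega⟩ = (0 : k) :=
    (congrArg (g el) (Fin.ext (by simp only [fin_mk_val]; omega))).trans h6.symm
  rw [hyv] at h7
  exact one_ne_zero h7

lemma U_end_scalar (e i j : ℕ) [NeZero e] (he : 2 ≤ e) (h1 : 1 ≤ i) (hij : i ≤ j)
    (hje : j ≤ e) (f : (U k e i j).V →ₗ[k] (U k e i j).V)
    (hf : f ∈ homSet (U k e i j) (U k e i j)) :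
    ∃ c : k, f = c • LinearMap.id := by
  obtain ⟨hv, ha, -⟩ := hf
  have hsgl : ∀ (x : Fin (j + 1 - i) → k) (r : Fin (j + 1 - i)),
      f x r = x r * f (sgl k (j + 1 - i) r) r := by
    intro x r
    have hrlt : i - 1 + (r : ℕ) < e := by have := r.isLt; omega
    have h2 := congrFun (LinearMap.congr_fun (hv ⟨i - 1 + (r : ℕ), hrlt⟩) x) r
    simp only [LinearMap.comp_apply] at h2
    have h3 : (U k e i j).v ⟨i - 1 + (r : ℕ), hrlt⟩ x = x r • sgl k (j + 1 - i) r := by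
      funext r'
      rw [U_v_apply]
      simp only [fin_mk_val, Pi.smul_apply, smul_eq_mul, sgl]
      by_cases hrr : r' = r
      · subst hrr; simp
      · rw [if_neg (fun hc : i - 1 + (r' : ℕ) = i - 1 + (r : ℕ) =>
          hrr (Fin.ext (by omega))), if_neg hrr, mul_zero]
    have h4 : (U k e i j).v ⟨i - 1 + (r : ℕ), hrlt⟩ (f x) r = f x r := by
      rw [U_v_apply, if_pos (by simp only [fin_mk_val])]
    rw [h3, map_smul] at h2
    rw [← h4, ← h2]
    simp only [Pi.smul_apply, smul_eq_mul]
  have hstep : ∀ (m : ℕ) (hm : m + 1 < j + 1 - i),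
      f (sgl k (j + 1 - i) ⟨m + 1, hm⟩) ⟨m + 1, hm⟩
        = f (sgl k (j + 1 - i) ⟨m, by omega⟩) ⟨m, by omega⟩ := by
    intro m hm
    have htlt : i - 1 + m < e := by omega
    have ha2 := congrFun (LinearMap.congr_fun (ha ⟨i - 1 + m, htlt⟩)
      (sgl k (j + 1 - i) ⟨m, by omega⟩)) ⟨m + 1, hm⟩
    simp only [LinearMap.comp_apply] at ha2
    have h5 : (U k e i j).a ⟨i - 1 + m, htlt⟩ (sgl k (j + 1 - i) ⟨m, by omega⟩)
        = sgl k (j + 1 - i) ⟨m + 1, hm⟩ := by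
      funext s
      rw [U_a_apply, sgl, sgl]
      simp only [Fin.ext_iff, fin_mk_val]
      split_ifs <;> first | rfl | (exfalso; omega)
    have h6 : (U k e i j).a ⟨i - 1 + m, htlt⟩ (f (sgl k (j + 1 - i) ⟨m, by omega⟩))
          ⟨m + 1, hm⟩
        = f (sgl k (j + 1 - i) ⟨m, by omega⟩) ⟨m, by omega⟩ := by
      rw [U_a_apply, if_pos ⟨by simp only [fin_mk_val]; omega,
        by simp only [fin_mk_val]; omega, by simp only [fin_mk_val]; omega⟩]
      exact congrArg _ (Fin.ext (by simp only [fin_mk_val]; omega))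
    rw [h5] at ha2
    rw [ha2, h6]
  have hall : ∀ (m : ℕ) (hm : m < j + 1 - i),
      f (sgl k (j + 1 - i) ⟨m, hm⟩) ⟨m, hm⟩
        = f (sgl k (j + 1 - i) ⟨0, by omega⟩) ⟨0, by omega⟩ := by
    intro m
    induction m with
    | zero => intro hm; rfl
    | succ m ih =>
      intro hm
      rw [hstep m hm]
      exact ih (by omega)
  refine ⟨f (sgl k (j + 1 - i) ⟨0, by omega⟩) ⟨0, by omega⟩, ?_⟩
  apply LinearMap.ext; intro x; funext r
  rw [hsgl x r]
  have hcr : f (sgl k (j + 1 - i) r) r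
      = f (sgl k (j + 1 - i) ⟨0, by omega⟩) ⟨0, by omega⟩ := hall r.val r.isLt
  rw [hcr, mul_comm]
  rfl

end Stmt4Main


/-- For `1 ≤ i ≤ j ≤ e`: every endomorphism of the uniserial
module `U_{[i,j]}` is a scalar multiple of the identity, the identity does not
factor through a projective `Λ_e`-module, and consequently the stable
endomorphism ring of `U_{[i,j]}` is isomorphic to `k`. -/
theorem uniserial_stable_end (k : Type) [Field k] (e : ℕ) (he : 2 ≤ e) [NeZero e]
    (i j : ℕ) (h1 : 1 ≤ i) (hij : i ≤ j) (hje : j ≤ e) :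
    (∀ f ∈ homSet (U k e i j) (U k e i j), ∃ c : k, f = c • LinearMap.id) ∧
    (¬ FactorsThroughProjective (U k e i j) LinearMap.id) ∧
    StableEndIsoScalars (U k e i j) := by
  have hsat := U_satisfies (k := k) e i j he h1 hij hje
  have hnf : ¬ FactorsThroughProjective (U k e i j) LinearMap.id := by
    rintro ⟨P, ⟨hPsat, hP⟩, g, hg, h, hh, hid⟩
    obtain ⟨h', hh', hph'⟩ := hP (Aext k e i (j + 1 - i)) (U k e i j)
      (A_satisfies e i (j + 1 - i) he (by omega)) hsat (pU k e i j)
      (pU_mem e i j h1 hij hje) (pU_surj e i j) h hh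
    exact no_split e i j he h1 hij hje (h' ∘ₗ g) (homSet_comp hh' hg)
      (by rw [← LinearMap.comp_assoc, hph', ← hid])
  refine ⟨fun f hf => U_end_scalar e i j he h1 hij hje f hf, hnf, hnf, ?_⟩
  intro f hf
  obtain ⟨c, hc⟩ := U_end_scalar e i j he h1 hij hje f hf
  refine ⟨c, ?_⟩
  rw [hc, sub_self]
  exact factors_zero _

end GBTA
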